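/- Let G be a finitely generated residually finite group and φ an automorphism with R(φ) < ∞. Then for all g, s ∈ G the twisted stabilizer {k ∈ G : k·g·φ(k)⁻¹ = s·g·φ(s)⁻¹} is finite. -/

import Mathlib

/-- A group is residually finite if every nontrivial element survives in some
finite quotient (equivalently, avoids some finite-index normal subgroup). -/
def IsResiduallyFinite (G : Type*) [Group G] : Prop :=
  ∀ g : G, g ≠ 1 → ∃ H : Subgroup G, H.Normal ∧ H.FiniteIndex ∧ g ∉ H

/-- The setoid of `φ`-twisted conjugacy: `g ~ h` iff `h = x * g * φ(x)⁻¹` for some `x`. -/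
def twistedConjSetoid {G : Type*} [Group G] (φ : G ≃* G) : Setoid G where
  r g h := ∃ x : G, h = x * g * (φ x)⁻¹
  iseqv := by
    refine ⟨fun g => ⟨1, by simp⟩, ?_, ?_⟩
    · rintro g h ⟨x, rfl⟩
      exact ⟨x⁻¹, by simp [mul_assoc]⟩
    · rintro a b c ⟨x, rfl⟩ ⟨y, rfl⟩
      exact ⟨y * x, by simp [map_mul, mul_assoc]⟩

namespace Stmt15Aux

/-- Sylvester-type bound for denominators in Egyptian fraction decompositions. -/
def W : ℕ → ℕ → ℕ
  | 0, _ => 1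
  | n + 1, b => max ((n + 1) * b) (W n ((n + 1) * b * b))

lemma W_mono : ∀ (n : ℕ) {b b' : ℕ}, b ≤ b' → W n b ≤ W n b'
  | 0, _, _, _ => le_rfl
  | n + 1, b, b', h => by
    simp only [W]
    exact max_le_max (Nat.mul_le_mul le_rfl h)
      (W_mono n (Nat.mul_le_mul (Nat.mul_le_mul le_rfl h) h))

lemma egyptian {α : Type*} :
    ∀ (n : ℕ) (s : Finset α) (f : α → ℕ) (a b : ℕ), s.card = n → 0 < a → 0 < b →
      (∀ i ∈ s, 0 < f i) → ((a : ℚ) / b = ∑ i ∈ s, (1 : ℚ) / f i) →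
      ∀ i ∈ s, f i ≤ W n b := by
  classical
  intro n
  induction n with
  | zero =>
    intro s f a b hcard _ _ _ _ i hi
    rw [Finset.card_eq_zero] at hcard
    simp [hcard] at hi
  | succ n ih =>
    intro s f a b hcard ha hb hf hsum i hi
    obtain ⟨j, hj, hjmin⟩ := s.exists_min_image f ⟨i, hi⟩
    have hfj : 0 < f j := hf j hj
    have hfi : 0 < f i := hf i hi
    have hbq : (0:ℚ) < b := by exact_mod_cast hb
    have haq : (1:ℚ) ≤ a := by exact_mod_cast ha
    have hfjq : (0:ℚ) < f j := by exact_mod_cast hfj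
    have hfiq : (0:ℚ) < f i := by exact_mod_cast hfi
    have hub : (a:ℚ) / b ≤ (n+1) / f j := by
      rw [hsum]
      calc ∑ k ∈ s, (1:ℚ)/f k ≤ ∑ _k ∈ s, (1:ℚ)/f j := by
            refine Finset.sum_le_sum fun k hk => ?_
            exact one_div_le_one_div_of_le hfjq (by exact_mod_cast hjmin k hk)
        _ = (n+1) / f j := by
            rw [Finset.sum_const, hcard]
            push_cast
            ring
    have h2 : (a:ℚ) * f j ≤ (n+1) * b := (div_le_div_iff₀ hbq hfjq).1 hub
    have h3 : (f j : ℚ) ≤ (n+1) * b := by nlinarith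
    have hjb : f j ≤ (n+1) * b := by exact_mod_cast h3
    by_cases hcase : f i ≤ (n+1) * b
    · simp only [W]
      exact le_trans hcase (le_max_left _ _)
    · push_neg at hcase
      have hij : i ≠ j := by
        intro h
        rw [h] at hcase
        omega
      have hi' : i ∈ s.erase j := Finset.mem_erase.2 ⟨hij, hi⟩
      have hsplit : ∑ k ∈ s, (1:ℚ)/f k = 1/(f j) + ∑ k ∈ s.erase j, (1:ℚ)/f k :=
        (Finset.add_sum_erase s _ hj).symm
      have hpos' : (1:ℚ)/f i ≤ ∑ k ∈ s.erase j, (1:ℚ)/f k :=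
        Finset.single_le_sum (f := fun k => (1:ℚ)/(f k)) (fun k _ => div_nonneg zero_le_one (Nat.cast_nonneg _)) hi'
      have hlt : (1:ℚ)/f j < (a:ℚ)/b := by
        rw [hsum, hsplit]
        have : (0:ℚ) < 1/f i := by positivity
        linarith
      have hltn : b < a * f j := by
        have := (div_lt_div_iff₀ hfjq hbq).1 hlt
        rw [one_mul] at this
        exact_mod_cast this
      have hcast : ((a * f j - b : ℕ) : ℚ) = (a:ℚ) * f j - b := by
        push_cast [Nat.cast_sub hltn.le]
        ring
      have hsum' : ((a * f j - b : ℕ):ℚ) / ((b * f j : ℕ):ℚ) = ∑ k ∈ s.erase j, (1:ℚ)/f k := by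
      -- ∑ erase = a/b - 1/fj
        have he : ∑ k ∈ s.erase j, (1:ℚ)/f k = (a:ℚ)/b - 1/f j := by
          rw [hsum, hsplit]; ring
        rw [he, hcast]
        push_cast
        field_simp
      have hcard' : (s.erase j).card = n := by
        rw [Finset.card_erase_of_mem hj, hcard]
        omega
      have hbfj : 0 < b * f j := Nat.mul_pos hb hfj
      have hres := ih (s.erase j) f (a * f j - b) (b * f j) hcard' (by omega) hbfj
        (fun k hk => hf k (Finset.mem_of_mem_erase hk)) hsum' i hi'
      calc f i ≤ W n (b * f j) := hres
        _ ≤ W n ((n+1)*b*b) := W_mono n (by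
              calc b * f j ≤ b * ((n+1)*b) := Nat.mul_le_mul le_rfl hjb
                _ = (n+1)*b*b := by ring)
        _ ≤ W (n+1) b := by
              simp only [W]
              exact le_max_right _ _

/-- Conjugating permutations along an equivalence, as a `MulEquiv`. -/
def permCongrMulEquiv {α β : Type*} (e : α ≃ β) : Equiv.Perm α ≃* Equiv.Perm β where
  toFun p := (e.symm.trans p).trans e
  invFun p := (e.trans p).trans e.symm
  left_inv p := by ext x; simp
  right_inv p := by ext x; simp
  map_mul' p q := by ext x; simp [Equiv.Perm.mul_apply]

lemma finite_monoidHom (G M : Type*) [Group G] [Group.FG G] [Monoid M] [Finite M] :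
    Finite (G →* M) := by
  obtain ⟨S, hSc, hSf⟩ := Group.fg_iff.1 ‹Group.FG G›
  haveI := hSf.to_subtype
  exact Finite.of_injective (fun f : G →* M => (fun x : S => f x))
    (fun f g h => MonoidHom.eq_of_eqOn_dense hSc fun x hx => congrFun h ⟨x, hx⟩)

variable {G : Type*} [Group G]

/-- The intersection of kernels of all homomorphisms to `Perm (Fin N)`. -/
def charSub (G : Type*) [Group G] (N : ℕ) : Subgroup G :=
  ⨅ ρ : G →* Equiv.Perm (Fin N), ρ.ker

lemma mem_charSub {N : ℕ} {x : G} :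
    x ∈ charSub G N ↔ ∀ ρ : G →* Equiv.Perm (Fin N), ρ x = 1 := by
  simp [charSub, Subgroup.mem_iInf, MonoidHom.mem_ker]

lemma charSub_normal (N : ℕ) : (charSub G N).Normal := by
  constructor
  intro x hx g
  rw [mem_charSub] at hx ⊢
  intro ρ
  simp [map_mul, hx ρ]

lemma charSub_finiteIndex (N : ℕ) [Group.FG G] : (charSub G N).FiniteIndex := by
  haveI := finite_monoidHom G (Equiv.Perm (Fin N))
  exact Subgroup.finiteIndex_iInf fun ρ => inferInstance

lemma charSub_inv (ψ : G ≃* G) (N : ℕ) : ∀ x ∈ charSub G N, ψ x ∈ charSub G N := by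
  intro x hx
  rw [mem_charSub] at hx ⊢
  intro ρ
  exact hx (ρ.comp ψ.toMonoidHom)

lemma exists_inv_subgroup [Group.FG G] (hrf : IsResiduallyFinite G) (ψ : G ≃* G) {z : G}
    (hz : z ≠ 1) :
    ∃ C : Subgroup G, C.Normal ∧ C.FiniteIndex ∧ (∀ x ∈ C, ψ x ∈ C) ∧ z ∉ C := by
  obtain ⟨H, hN, hFI, hzH⟩ := hrf z hz
  haveI := hN
  haveI := hFI
  obtain ⟨N, ⟨e⟩⟩ := Finite.exists_equiv_fin (G ⧸ H)
  refine ⟨charSub G N, charSub_normal N, charSub_finiteIndex N, charSub_inv ψ N,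
    fun hmem => hzH ?_⟩
  have h1 : (MulAction.toPermHom G (G ⧸ H)) z = 1 := by
    have h2 := mem_charSub.1 hmem
      ((permCongrMulEquiv e).toMonoidHom.comp (MulAction.toPermHom G (G ⧸ H)))
    have h3 : (permCongrMulEquiv e) ((MulAction.toPermHom G (G ⧸ H)) z) = 1 := h2
    have := (permCongrMulEquiv e).injective (h3.trans (map_one (permCongrMulEquiv e)).symm)
    simpa using this
  have hz2 : z ∈ H.normalCore := by
    rw [Subgroup.normalCore_eq_ker]
    exact h1
  exact H.normalCore_le hz2

variable {G : Type*} [Group G]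

def TwQ (G : Type*) [Group G] (H : Subgroup G) := G ⧸ H

instance (H : Subgroup G) [H.Normal] : Group (TwQ G H) :=
  inferInstanceAs (Group (G ⧸ H))

instance (H : Subgroup G) [H.Normal] [H.FiniteIndex] : Finite (TwQ G H) :=
  inferInstanceAs (Finite (G ⧸ H))

def twmk (H : Subgroup G) [H.Normal] : G →* TwQ G H := QuotientGroup.mk' H

lemma twmk_surj (H : Subgroup G) [H.Normal] : Function.Surjective (twmk H) :=
  QuotientGroup.mk'_surjective H

lemma twmk_eq_one_iff (H : Subgroup G) [H.Normal] {x : G} : twmk H x = 1 ↔ x ∈ H :=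
  QuotientGroup.eq_one_iff x

def twAct (ψ : G ≃* G) (H : Subgroup G) [H.Normal] : MulAction G (TwQ G H) where
  smul x k := twmk H x * k * (twmk H (ψ x))⁻¹
  one_smul k := by
    show twmk H 1 * k * (twmk H (ψ 1))⁻¹ = k
    simp
  mul_smul x y k := by
    show twmk H (x * y) * k * (twmk H (ψ (x * y)))⁻¹
      = twmk H x * (twmk H y * k * (twmk H (ψ y))⁻¹) * (twmk H (ψ x))⁻¹
    simp [map_mul, mul_assoc]

lemma nat_card_sigma {ι : Type*} [Fintype ι] (f : ι → Type*) [∀ i, Finite (f i)] :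
    Nat.card (Σ i, f i) = ∑ i, Nat.card (f i) := by
  letI := fun i => Fintype.ofFinite (f i)
  simp [Nat.card_eq_fintype_card, Fintype.card_sigma]

lemma fix_finite [Group.FG G] (hrf : IsResiduallyFinite G) (ψ : G ≃* G)
    (hR : Finite (Quotient (twistedConjSetoid ψ))) :
    ({x : G | ψ x = x} : Set G).Finite := by
  classical
  by_contra hinf
  rw [← Set.not_infinite, not_not] at hinf
  set r := Nat.card (Quotient (twistedConjSetoid ψ)) with hr
  set B := (Finset.range (r + 1)).sup (fun m => W m 1) with hB
  let u : ℕ ↪ ({x : G | ψ x = x} : Set G) := hinf.natEmbedding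
  -- separating invariant finite-index normal subgroup
  have hex : ∀ p : Fin (B + 1) × Fin (B + 1), ∃ C : Subgroup G,
      C.Normal ∧ C.FiniteIndex ∧ (∀ x ∈ C, ψ x ∈ C) ∧
      (p.1 ≠ p.2 → ((u p.1 : G))⁻¹ * (u p.2 : G) ∉ C) := by
    intro p
    by_cases hp : p.1 = p.2
    · exact ⟨⊤, inferInstance, inferInstance, fun x _ => trivial, fun h => absurd hp h⟩
    · have hz : ((u p.1 : G))⁻¹ * (u p.2 : G) ≠ 1 := by
        intro h
        apply hp
        have h2 : (u p.1 : G) = (u p.2 : G) := by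
          rw [← inv_inv (u p.1 : G), inv_mul_eq_one.1 h, inv_inv]
        have h3 : u (p.1 : ℕ) = u (p.2 : ℕ) := Subtype.ext h2
        have := u.injective h3
        exact Fin.ext this
      obtain ⟨C, h1, h2, h3, h4⟩ := exists_inv_subgroup hrf ψ hz
      exact ⟨C, h1, h2, h3, fun _ => h4⟩
  choose C hCnorm hCfin hCinv hCsep using hex
  set H : Subgroup G := ⨅ p, C p with hH
  haveI hHnorm : H.Normal := by
    constructor
    intro x hx gg
    rw [hH, Subgroup.mem_iInf] at hx ⊢
    exact fun p => (hCnorm p).conj_mem x (hx p) gg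
  haveI hHfin : H.FiniteIndex := Subgroup.finiteIndex_iInf fun p => hCfin p
  have hHinv : ∀ x ∈ H, ψ x ∈ H := by
    intro x hx
    rw [hH, Subgroup.mem_iInf] at hx ⊢
    exact fun p => hCinv p x (hx p)
  have hHsep : ∀ p : Fin (B + 1) × Fin (B + 1), p.1 ≠ p.2 →
      ((u p.1 : G))⁻¹ * (u p.2 : G) ∉ H := by
    intro p hp hmem
    rw [hH, Subgroup.mem_iInf] at hmem
    exact hCsep p hp (hmem p)
  -- twisted action on the finite quotient
  letI act := twAct ψ H
  haveI : Nonempty (TwQ G H) := ⟨1⟩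
  let Ω := MulAction.orbitRel.Quotient G (TwQ G H)
  haveI : Finite Ω := Quotient.finite _
  haveI fΩ : Fintype Ω := Fintype.ofFinite Ω
  set NQ := Nat.card (TwQ G H) with hNQ
  have hNQpos : 0 < NQ := Nat.card_pos
  have hstab_le : ∀ k : TwQ G H, H ≤ MulAction.stabilizer G k := by
    intro k x hx
    obtain ⟨h, rfl⟩ := twmk_surj H k
    show x • (twmk H h) = twmk H h
    show twmk H x * twmk H h * (twmk H (ψ x))⁻¹ = twmk H h
    rw [(twmk_eq_one_iff H).2 hx, (twmk_eq_one_iff H).2 (hHinv x hx)]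
    simp
  have hcard_orbit : ∀ k : TwQ G H,
      Nat.card (MulAction.orbit G k) = (MulAction.stabilizer G k).index := by
    intro k
    rw [Subgroup.index_eq_card]
    exact Nat.card_congr (MulAction.orbitEquivQuotientStabilizer G k)
  have hindexNQ : H.index = NQ := by
    rw [Subgroup.index_eq_card, hNQ]
    rfl
  have hrel : ∀ k : TwQ G H,
      H.relIndex (MulAction.stabilizer G k) * Nat.card (MulAction.orbit G k) = NQ := by
    intro k
    rw [hcard_orbit k, Subgroup.relIndex_mul_index (hstab_le k), hindexNQ]
  have hdecomp : NQ = ∑ ω : Ω, Nat.card ω.orbit := by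
    rw [hNQ, Nat.card_congr (MulAction.selfEquivSigmaOrbits' G (TwQ G H))]
    exact nat_card_sigma _
  have horbitcard : ∀ ω : Ω, Nat.card ω.orbit = Nat.card (MulAction.orbit G ω.out) := by
    intro ω
    rw [MulAction.orbitRel.Quotient.orbit_eq_orbit_out ω Quotient.out_eq']
  set f : Ω → ℕ := fun ω => H.relIndex (MulAction.stabilizer G ω.out) with hf
  have hfmul : ∀ ω : Ω, f ω * Nat.card ω.orbit = NQ := by
    intro ω
    rw [horbitcard ω]
    exact hrel _
  have hfpos : ∀ ω, 0 < f ω := by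
    intro ω
    rcases Nat.eq_zero_or_pos (f ω) with h | h
    · exfalso
      have := hfmul ω
      rw [h, zero_mul] at this
      omega
    · exact h
  have horbpos : ∀ ω : Ω, 0 < Nat.card ω.orbit := by
    intro ω
    rcases Nat.eq_zero_or_pos (Nat.card ω.orbit) with h | h
    · exfalso
      have := hfmul ω
      rw [h, mul_zero] at this
      omega
    · exact h
  -- the Egyptian fraction identity
  have hsum : ((1 : ℕ) : ℚ) / ((1 : ℕ) : ℚ) = ∑ ω : Ω, (1 : ℚ) / (f ω) := by
    have h1 : ∀ ω : Ω, (1 : ℚ) / (f ω) = (Nat.card ω.orbit : ℚ) / NQ := by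
      intro ω
      have h' : Nat.card ω.orbit * f ω = NQ := by rw [mul_comm]; exact hfmul ω
      rw [div_eq_div_iff (by exact_mod_cast (hfpos ω).ne') (by exact_mod_cast hNQpos.ne'),
        one_mul]
      exact_mod_cast h'.symm
    calc ((1 : ℕ) : ℚ) / ((1 : ℕ) : ℚ) = 1 := by norm_num
      _ = (∑ ω : Ω, (Nat.card ω.orbit : ℚ)) / NQ := by
          rw [← Nat.cast_sum]
          rw [← hdecomp]
          field_simp
      _ = ∑ ω : Ω, (Nat.card ω.orbit : ℚ) / NQ := by rw [Finset.sum_div]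
      _ = ∑ ω : Ω, (1 : ℚ) / (f ω) := by
          refine Finset.sum_congr rfl fun ω _ => ?_
          rw [h1 ω]
  have hbound : ∀ ω : Ω, f ω ≤ W (Fintype.card Ω) 1 := by
    intro ω
    exact egyptian (Fintype.card Ω) Finset.univ f 1 1 (by simp) one_pos one_pos
      (fun i _ => hfpos i) (by exact_mod_cast hsum) ω (Finset.mem_univ ω)
  -- card Ω ≤ r
  have hσ : ∃ σ : Quotient (twistedConjSetoid ψ) → Ω, Function.Surjective σ := by
    refine ⟨Quotient.lift (fun h => (Quotient.mk'' (twmk H h) : Ω)) ?_, ?_⟩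
    · rintro h h' ⟨x, rfl⟩
      apply Quotient.sound'
      refine MulAction.mem_orbit_iff.2 ⟨x⁻¹, ?_⟩
      show twmk H x⁻¹ * twmk H (x * h * (ψ x)⁻¹) * (twmk H (ψ x⁻¹))⁻¹ = twmk H h
      simp [map_mul, map_inv, mul_assoc]
    · intro ω
      obtain ⟨k, rfl⟩ := Quotient.exists_rep ω
      obtain ⟨h, rfl⟩ := twmk_surj H k
      exact ⟨Quotient.mk _ h, rfl⟩
  obtain ⟨σ, hσs⟩ := hσ
  have hΩr : Fintype.card Ω ≤ r := by
    rw [← Nat.card_eq_fintype_card, hr]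
    exact Nat.card_le_card_of_surjective σ hσs
  have hWB : W (Fintype.card Ω) 1 ≤ B := by
    rw [hB]
    exact Finset.le_sup (f := fun m => W m 1) (Finset.mem_range.2 (Nat.lt_succ_of_le hΩr))
  -- lower bound at the basepoint
  set K := MulAction.stabilizer G (1 : TwQ G H) with hK
  have humem : ∀ i : Fin (B + 1), (u i : G) ∈ K := by
    intro i
    have hfix : ψ (u i : G) = (u i : G) := (u (i : ℕ)).2
    show ((u i : G)) • (1 : TwQ G H) = 1
    show twmk H (u i : G) * 1 * (twmk H (ψ (u i : G)))⁻¹ = 1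
    rw [hfix]
    simp
  have hrelK : H.relIndex K = f (Quotient.mk'' (1 : TwQ G H)) := by
    have h1 : H.relIndex K * Nat.card (MulAction.orbit G (1 : TwQ G H)) = NQ := hrel 1
    have h2 : f (Quotient.mk'' (1 : TwQ G H)) *
        Nat.card (MulAction.orbitRel.Quotient.orbit (Quotient.mk'' (1 : TwQ G H) : Ω)) = NQ := hfmul _
    have h3 : MulAction.orbitRel.Quotient.orbit (Quotient.mk'' (1 : TwQ G H) : Ω) = MulAction.orbit G (1 : TwQ G H) :=
      MulAction.orbitRel.Quotient.orbit_mk _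
    rw [h3] at h2
    have hpos : 0 < Nat.card (MulAction.orbit G (1 : TwQ G H)) := by
      have := horbpos (Quotient.mk'' (1 : TwQ G H))
      rwa [h3] at this
    exact Nat.eq_of_mul_eq_mul_right hpos (h1.trans h2.symm)
  have hcardQK : Nat.card (K ⧸ H.subgroupOf K) = H.relIndex K := by
    rw [Subgroup.relIndex, Subgroup.index_eq_card]
  haveI : Finite (K ⧸ H.subgroupOf K) := by
    apply Nat.finite_of_card_ne_zero
    rw [hcardQK, hrelK]
    exact (hfpos _).ne'
  set θ : Fin (B + 1) → K ⧸ H.subgroupOf K :=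
    fun i => QuotientGroup.mk ⟨(u i : G), humem i⟩ with hθ
  have hθinj : Function.Injective θ := by
    intro i j hij
    by_contra hne
    have h2 := QuotientGroup.eq.1 hij
    have h3 : ((u i : G))⁻¹ * (u j : G) ∈ H := by
      simpa [Subgroup.mem_subgroupOf] using h2
    exact hHsep (i, j) hne h3
  have hlow : B + 1 ≤ H.relIndex K := by
    have h4 := Nat.card_le_card_of_injective θ hθinj
    rw [hcardQK] at h4
    simpa using h4
  have hup : f (Quotient.mk'' (1 : TwQ G H)) ≤ B := le_trans (hbound _) hWB
  rw [hrelK] at hlow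
  omega

lemma finite_quot_conj (φ : G ≃* G) (g : G)
    (hR : Finite (Quotient (twistedConjSetoid φ))) :
    Finite (Quotient (twistedConjSetoid (φ.trans (MulAut.conj g)))) := by
  set ψ : G ≃* G := φ.trans (MulAut.conj g) with hψ
  have hψa : ∀ x : G, ψ x = g * φ x * g⁻¹ := fun x => rfl
  have key : ∀ h h' : G, (twistedConjSetoid ψ).r h h' →
      (twistedConjSetoid φ).r (h * g) (h' * g) := by
    rintro h h' ⟨x, rfl⟩
    refine ⟨x, ?_⟩
    rw [hψa]
    group
  refine Finite.of_injective
    (fun q : Quotient (twistedConjSetoid ψ) =>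
      Quotient.liftOn q (fun h => Quotient.mk (twistedConjSetoid φ) (h * g))
        (fun h h' hr => Quotient.sound (key h h' hr))) ?_
  intro q q'
  induction q using Quotient.ind
  induction q' using Quotient.ind
  rename_i h h'
  intro heq
  obtain ⟨x, hx⟩ := Quotient.exact heq
  apply Quotient.sound
  refine ⟨x, ?_⟩
  have : h' = x * (h * g) * (φ x)⁻¹ * g⁻¹ := by
    rw [← hx]
    group
  rw [this, hψa]
  group

end Stmt15Aux

theorem stmt_15 {G : Type*} [Group G] [Group.FG G]
    (hrf : IsResiduallyFinite G) (φ : G ≃* G)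
    (hR : Finite (Quotient (twistedConjSetoid φ))) (g s : G) :
    ({k : G | k * g * (φ k)⁻¹ = s * g * (φ s)⁻¹} : Set G).Finite := by
  classical
  set ψ : G ≃* G := φ.trans (MulAut.conj g) with hψ
  have hψa : ∀ x : G, ψ x = g * φ x * g⁻¹ := fun x => rfl
  have hR' : Finite (Quotient (twistedConjSetoid ψ)) := Stmt15Aux.finite_quot_conj φ g hR
  have hFix : ({x : G | ψ x = x} : Set G).Finite := Stmt15Aux.fix_finite hrf ψ hR'
  refine Set.Finite.subset (hFix.image (fun x => s * x)) ?_
  intro k hk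
  have hk' : k * g * (φ k)⁻¹ = s * g * (φ s)⁻¹ := hk
  refine ⟨s⁻¹ * k, ?_, by group⟩
  show ψ (s⁻¹ * k) = s⁻¹ * k
  have h2 : (φ k)⁻¹ = g⁻¹ * k⁻¹ * (s * g * (φ s)⁻¹) := by
    rw [← hk']
    group
  have h3 : φ k = (g⁻¹ * k⁻¹ * (s * g * (φ s)⁻¹))⁻¹ := by
    rw [← h2, inv_inv]
  rw [hψa, map_mul, map_inv, h3]
  group
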